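/- For any permutation σ of {1,…,2n} and either fixed row index i ∈ {1,2}, one has E*(E_{i σ(1)}, E_{i σ(2)}, …, E_{i σ(2n)}) = sgn(σ) · (2n)!. -/

import Mathlib

/- STATEMENT 9: For any permutation σ of the columns and either fixed row index i,
`E*(E_{iσ(1)}, …, E_{iσ(2n)}) = sgn(σ)·(2n)!`. (0-indexed.) -/

/-- `Ω* k l (X, Y) = ∑_{i=1}^{2} (X_{ik} Y_{il} − X_{il} Y_{ik})`. -/
noncomputable def Omst (n : ℕ) (k l : Fin (2 * n)) (X Y : Fin 2 → Fin (2 * n) → ℝ) : ℝ :=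
  ∑ i : Fin 2, (X i k * Y i l - X i l * Y i k)

/-- `E*(v₁,…,v_{2n}) = ∑_σ sgn σ (Ω*_{σ(1)σ(2)} ∧ ⋯ ∧ Ω*_{σ(2n−1)σ(2n)})(v₁,…,v_{2n})`. -/
noncomputable def Estar (n : ℕ) (v : Fin (2 * n) → (Fin 2 → Fin (2 * n) → ℝ)) : ℝ :=
  ∑ σ : Equiv.Perm (Fin (2 * n)), ((Equiv.Perm.sign σ : ℤ) : ℝ) *
    ((1 / 2 ^ n : ℝ) * ∑ τ : Equiv.Perm (Fin (2 * n)), ((Equiv.Perm.sign τ : ℤ) : ℝ) *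
      ∏ j : Fin n,
        Omst n (σ ⟨2 * j.1, by have := j.isLt; omega⟩) (σ ⟨2 * j.1 + 1, by have := j.isLt; omega⟩)
          (v (τ ⟨2 * j.1, by have := j.isLt; omega⟩)) (v (τ ⟨2 * j.1 + 1, by have := j.isLt; omega⟩)))


/-- standard basis matrix `E i k`. -/
noncomputable def Emat (n : ℕ) (i : Fin 2) (k : Fin (2 * n)) : Fin 2 → Fin (2 * n) → ℝ :=
  fun a b => if a = i ∧ b = k then 1 else 0


open Finset Equiv

namespace Stmt9

variable (n : ℕ)

def e0 (j : Fin n) : Fin (2 * n) := ⟨2 * j.1, by have := j.isLt; omega⟩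
def e1 (j : Fin n) : Fin (2 * n) := ⟨2 * j.1 + 1, by have := j.isLt; omega⟩

lemma e0_ne_e1 (j : Fin n) : e0 n j ≠ e1 n j := by
  simp [e0, e1, Fin.ext_iff]

lemma swap_commute {a b : Fin n} (hab : a ≠ b) :
    Commute (Equiv.swap (e0 n a) (e1 n a)) (Equiv.swap (e0 n b) (e1 n b)) := by
  apply Equiv.Perm.Disjoint.commute
  intro x
  have hab' : a.1 ≠ b.1 := fun h => hab (Fin.ext h)
  by_cases h0 : x = e0 n a ∨ x = e1 n a
  · right
    apply Equiv.swap_apply_of_ne_of_ne <;>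
      rcases h0 with h | h <;> subst h <;> simp [e0, e1, Fin.ext_iff] <;> omega
  · left
    push_neg at h0
    exact Equiv.swap_apply_of_ne_of_ne h0.1 h0.2

lemma comm_hyp (t : Finset (Fin n)) :
    (↑t : Set (Fin n)).Pairwise (Function.onFun Commute fun j => Equiv.swap (e0 n j) (e1 n j)) := by
  intro a _ b _ hab
  exact swap_commute n hab

noncomputable def piT (t : Finset (Fin n)) : Equiv.Perm (Fin (2 * n)) :=
  t.noncommProd (fun j => Equiv.swap (e0 n j) (e1 n j)) (comm_hyp n t)

lemma piT_apply (t : Finset (Fin n)) (j : Fin n) :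
    (piT n t (e0 n j) = if j ∈ t then e1 n j else e0 n j) ∧
    (piT n t (e1 n j) = if j ∈ t then e0 n j else e1 n j) := by
  classical
  induction t using Finset.induction_on with
  | empty => simp [piT]
  | @insert a s ha ih =>
    have hins : piT n (insert a s) =
        Equiv.swap (e0 n a) (e1 n a) * piT n s := by
      unfold piT
      exact Finset.noncommProd_insert_of_notMem s a _ _ ha
    by_cases hja : j = a
    · subst hja
      have h0 : piT n s (e0 n j) = e0 n j := by simpa [ha] using ih.1
      have h1 : piT n s (e1 n j) = e1 n j := by simpa [ha] using ih.2
      simp [hins, h0, h1]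
    · have hj0 : e0 n j ≠ e0 n a := by
        have : j.1 ≠ a.1 := fun h => hja (Fin.ext h)
        simp [e0, Fin.ext_iff]; omega
      have hj0' : e0 n j ≠ e1 n a := by
        simp [e0, e1, Fin.ext_iff]; omega
      have hj1 : e1 n j ≠ e0 n a := by
        simp [e0, e1, Fin.ext_iff]; omega
      have hj1' : e1 n j ≠ e1 n a := by
        have : j.1 ≠ a.1 := fun h => hja (Fin.ext h)
        simp [e1, Fin.ext_iff]; omega
      have hmem : j ∈ insert a s ↔ j ∈ s := by simp [hja]
      constructor
      · rw [hins]
        simp only [Equiv.Perm.mul_apply, ih.1, hmem]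
        by_cases hjs : j ∈ s <;>
          simp [hjs, Equiv.swap_apply_of_ne_of_ne, hj0, hj0', hj1, hj1']
      · rw [hins]
        simp only [Equiv.Perm.mul_apply, ih.2, hmem]
        by_cases hjs : j ∈ s <;>
          simp [hjs, Equiv.swap_apply_of_ne_of_ne, hj0, hj0', hj1, hj1']

lemma piT_sign (t : Finset (Fin n)) :
    Equiv.Perm.sign (piT n t) = (-1 : ℤˣ) ^ t.card := by
  classical
  induction t using Finset.induction_on with
  | empty => simp [piT]
  | @insert a s ha ih =>
    have hins : piT n (insert a s) =
        Equiv.swap (e0 n a) (e1 n a) * piT n s :=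
      Finset.noncommProd_insert_of_notMem s a _ _ ha
    rw [hins, map_mul, Equiv.Perm.sign_swap (e0_ne_e1 n a), ih,
      Finset.card_insert_of_notMem ha, pow_succ]
    exact (mul_comm _ _)

lemma perm_ext_pairs {π π' : Equiv.Perm (Fin (2 * n))}
    (h : ∀ j : Fin n, π (e0 n j) = π' (e0 n j) ∧ π (e1 n j) = π' (e1 n j)) :
    π = π' := by
  apply Equiv.ext
  intro x
  have hx := x.isLt
  set j : Fin n := ⟨x.1 / 2, by omega⟩ with hj
  rcases Nat.even_or_odd x.1 with he | ho
  · have hxe : x = e0 n j := by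
      apply Fin.ext
      show x.1 = 2 * (x.1 / 2)
      rcases he with ⟨c, hc⟩; omega
    rw [hxe]; exact (h j).1
  · have hxe : x = e1 n j := by
      apply Fin.ext
      show x.1 = 2 * (x.1 / 2) + 1
      rcases ho with ⟨c, hc⟩; omega
    rw [hxe]; exact (h j).2

end Stmt9

namespace Stmt9

noncomputable def Aind (n : ℕ) (π : Equiv.Perm (Fin (2 * n))) (j : Fin n) : ℝ :=
  (if π (e0 n j) = e0 n j then 1 else 0) * (if π (e1 n j) = e1 n j then 1 else 0)

noncomputable def Bind (n : ℕ) (π : Equiv.Perm (Fin (2 * n))) (j : Fin n) : ℝ :=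
  (if π (e1 n j) = e0 n j then 1 else 0) * (if π (e0 n j) = e1 n j then 1 else 0)

lemma indic (t : Finset (Fin n)) (π : Equiv.Perm (Fin (2 * n))) :
    (∏ j ∈ t, Bind n π j) * (∏ j ∈ Finset.univ \ t, Aind n π j) =
      if π = piT n t then 1 else 0 := by
  classical
  by_cases hπ : π = piT n t
  · subst hπ
    rw [if_pos rfl]
    have h1 : ∏ j ∈ t, Bind n (piT n t) j = 1 := by
      apply Finset.prod_eq_one
      intro j hj
      simp [Bind, (piT_apply n t j).1, (piT_apply n t j).2, hj]
    have h2 : ∏ j ∈ Finset.univ \ t, Aind n (piT n t) j = 1 := by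
      apply Finset.prod_eq_one
      intro j hj
      have hj' : j ∉ t := (Finset.mem_sdiff.mp hj).2
      simp [Aind, (piT_apply n t j).1, (piT_apply n t j).2, hj']
    rw [h1, h2, one_mul]
  · rw [if_neg hπ]
    have : ¬ ∀ j : Fin n, π (e0 n j) = piT n t (e0 n j) ∧ π (e1 n j) = piT n t (e1 n j) := by
      intro hc
      exact hπ (perm_ext_pairs n hc)
    push_neg at this
    obtain ⟨j, hj⟩ := this
    by_cases hjt : j ∈ t
    · have hB : Bind n π j = 0 := by
        rcases Classical.em (π (e0 n j) = piT n t (e0 n j)) with h0 | h0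
        · have h1 := hj h0
          rw [(piT_apply n t j).2, if_pos hjt] at h1
          simp [Bind, h1]
        · rw [(piT_apply n t j).1, if_pos hjt] at h0
          simp [Bind, h0]
      rw [Finset.prod_eq_zero hjt hB, zero_mul]
    · have hA : Aind n π j = 0 := by
        rcases Classical.em (π (e0 n j) = piT n t (e0 n j)) with h0 | h0
        · have h1 := hj h0
          rw [(piT_apply n t j).2, if_neg hjt] at h1
          simp [Aind, h1]
        · rw [(piT_apply n t j).1, if_neg hjt] at h0
          simp [Aind, h0]
      rw [Finset.prod_eq_zero (Finset.mem_sdiff.mpr ⟨Finset.mem_univ j, hjt⟩) hA, mul_zero]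

lemma S_eq : ∑ π : Equiv.Perm (Fin (2 * n)), ((Equiv.Perm.sign π : ℤ) : ℝ) *
    ∏ j : Fin n, (Aind n π j - Bind n π j) = 2 ^ n := by
  classical
  have hprod : ∀ π : Equiv.Perm (Fin (2 * n)),
      ∏ j : Fin n, (Aind n π j - Bind n π j) =
        ∑ t ∈ (Finset.univ : Finset (Fin n)).powerset,
          ((-1 : ℝ) ^ t.card * if π = piT n t then 1 else 0) := by
    intro π
    have : ∀ j : Fin n, Aind n π j - Bind n π j = (fun j => -Bind n π j) j + Aind n π j := by
      intro j; ring
    rw [Finset.prod_congr rfl (fun j _ => this j), Finset.prod_add]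
    apply Finset.sum_congr rfl
    intro t _
    have hneg : ∏ i ∈ t, -Bind n π i = (-1 : ℝ) ^ t.card * ∏ i ∈ t, Bind n π i := by
      rw [show (fun i => -Bind n π i) = fun i => (-1 : ℝ) * Bind n π i by funext i; ring]
      rw [Finset.prod_mul_distrib, Finset.prod_const]
    rw [hneg, mul_assoc, indic]
  calc ∑ π : Equiv.Perm (Fin (2 * n)), ((Equiv.Perm.sign π : ℤ) : ℝ) *
        ∏ j : Fin n, (Aind n π j - Bind n π j)
      = ∑ t ∈ (Finset.univ : Finset (Fin n)).powerset,
          ∑ π : Equiv.Perm (Fin (2 * n)), ((Equiv.Perm.sign π : ℤ) : ℝ) *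
            ((-1 : ℝ) ^ t.card * if π = piT n t then 1 else 0) := by
        rw [Finset.sum_comm]
        apply Finset.sum_congr rfl
        intro π _
        rw [hprod π, Finset.mul_sum]
    _ = ∑ t ∈ (Finset.univ : Finset (Fin n)).powerset, 1 := by
        apply Finset.sum_congr rfl
        intro t _
        have : ∀ π : Equiv.Perm (Fin (2 * n)),
            ((Equiv.Perm.sign π : ℤ) : ℝ) *
              ((-1 : ℝ) ^ t.card * if π = piT n t then 1 else 0) =
            if π = piT n t then ((Equiv.Perm.sign π : ℤ) : ℝ) * (-1 : ℝ) ^ t.card else 0 := by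
          intro π
          by_cases h : π = piT n t <;> simp [h]
        rw [Finset.sum_congr rfl (fun π _ => this π), Finset.sum_ite_eq' Finset.univ]
        rw [if_pos (Finset.mem_univ _), piT_sign]
        push_cast
        rw [← mul_pow]
        norm_num
    _ = 2 ^ n := by
        rw [Finset.sum_const, Finset.card_powerset, Finset.card_univ, Fintype.card_fin]
        simp

end Stmt9

namespace Stmt9

lemma omst_basis (n : ℕ) (i : Fin 2) (k l a b : Fin (2 * n)) :
    Omst n k l (Emat n i a) (Emat n i b) =
      (if k = a then (1 : ℝ) else 0) * (if l = b then 1 else 0) -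
      (if l = a then 1 else 0) * (if k = b then 1 else 0) := by
  unfold Omst Emat
  rw [Fin.sum_univ_two]
  fin_cases i <;> simp

lemma sign_cancel (u v : ℤˣ) : (((u * v : ℤˣ) : ℤ) : ℝ) * ((u : ℤ) : ℝ) = ((v : ℤ) : ℝ) := by
  rcases Int.units_eq_one_or u with h | h <;> rcases Int.units_eq_one_or v with h' | h' <;>
    simp [h, h']

noncomputable def Gp (n : ℕ) (ρ τ : Equiv.Perm (Fin (2 * n))) : ℝ :=
  ∏ j : Fin n,
    ((if ρ (e0 n j) = τ (e0 n j) then (1 : ℝ) else 0) *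
        (if ρ (e1 n j) = τ (e1 n j) then 1 else 0) -
      (if ρ (e1 n j) = τ (e0 n j) then 1 else 0) *
        (if ρ (e0 n j) = τ (e1 n j) then 1 else 0))

lemma Gp_shift (n : ℕ) (τ π : Equiv.Perm (Fin (2 * n))) :
    Gp n (τ * π) τ = ∏ j : Fin n, (Aind n π j - Bind n π j) := by
  unfold Gp Aind Bind
  apply Finset.prod_congr rfl
  intro j _
  simp [Equiv.Perm.mul_apply]

end Stmt9

section Main
open Stmt9

theorem stmt_9' (n : ℕ) (σ : Equiv.Perm (Fin (2 * n))) (i : Fin 2) :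
    Estar n (fun a => Emat n i (σ a)) =
      ((Equiv.Perm.sign σ : ℤ) : ℝ) * (Nat.factorial (2 * n) : ℝ) := by
  classical
  have hA : Estar n (fun a => Emat n i (σ a)) =
      ∑ ρ : Equiv.Perm (Fin (2 * n)), ((Equiv.Perm.sign ρ : ℤ) : ℝ) * ((1 / 2 ^ n : ℝ) *
        ∑ τ : Equiv.Perm (Fin (2 * n)), ((Equiv.Perm.sign τ : ℤ) : ℝ) * Gp n ρ (σ * τ)) := by
    unfold Estar
    apply Finset.sum_congr rfl; intro ρ _
    congr 1; congr 1
    apply Finset.sum_congr rfl; intro τ _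
    congr 1
    apply Finset.prod_congr rfl; intro j _
    exact omst_basis n i _ _ _ _
  have hB : ∀ ρ : Equiv.Perm (Fin (2 * n)),
      (∑ τ : Equiv.Perm (Fin (2 * n)), ((Equiv.Perm.sign τ : ℤ) : ℝ) * Gp n ρ (σ * τ)) =
        ((Equiv.Perm.sign σ : ℤ) : ℝ) *
          ∑ τ : Equiv.Perm (Fin (2 * n)), ((Equiv.Perm.sign τ : ℤ) : ℝ) * Gp n ρ τ := by
    intro ρ
    have hbij : Function.Bijective (fun τ : Equiv.Perm (Fin (2 * n)) => σ * τ) :=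
      (Equiv.mulLeft σ).bijective
    rw [Finset.mul_sum]
    refine Fintype.sum_bijective (fun τ => σ * τ) hbij _ _ ?_
    intro τ
    show ((Equiv.Perm.sign τ : ℤ) : ℝ) * Gp n ρ (σ * τ) =
      ((Equiv.Perm.sign σ : ℤ) : ℝ) * (((Equiv.Perm.sign (σ * τ) : ℤ) : ℝ) * Gp n ρ (σ * τ))
    rw [map_mul, ← mul_assoc]
    congr 1
    rcases Int.units_eq_one_or (Equiv.Perm.sign σ) with h | h <;>
      rcases Int.units_eq_one_or (Equiv.Perm.sign τ) with h' | h' <;> simp [h, h']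
  rw [hA, Finset.sum_congr rfl (fun ρ _ => by rw [hB ρ])]
  have hstep : ∀ ρ : Equiv.Perm (Fin (2 * n)),
      ((Equiv.Perm.sign ρ : ℤ) : ℝ) * ((1 / 2 ^ n : ℝ) * (((Equiv.Perm.sign σ : ℤ) : ℝ) *
        ∑ τ : Equiv.Perm (Fin (2 * n)), ((Equiv.Perm.sign τ : ℤ) : ℝ) * Gp n ρ τ)) =
      ((Equiv.Perm.sign σ : ℤ) : ℝ) * (1 / 2 ^ n : ℝ) *
        ∑ τ : Equiv.Perm (Fin (2 * n)),
          ((Equiv.Perm.sign ρ : ℤ) : ℝ) * (((Equiv.Perm.sign τ : ℤ) : ℝ) * Gp n ρ τ) := by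
    intro ρ
    rw [← Finset.mul_sum Finset.univ
      (fun τ => ((Equiv.Perm.sign τ : ℤ) : ℝ) * Gp n ρ τ) ((Equiv.Perm.sign ρ : ℤ) : ℝ)]
    ring
  rw [Finset.sum_congr rfl (fun ρ _ => hstep ρ), ← Finset.mul_sum, Finset.sum_comm]
  have hinner : ∀ τ : Equiv.Perm (Fin (2 * n)),
      (∑ ρ : Equiv.Perm (Fin (2 * n)),
        ((Equiv.Perm.sign ρ : ℤ) : ℝ) * (((Equiv.Perm.sign τ : ℤ) : ℝ) * Gp n ρ τ)) =
      (2 : ℝ) ^ n := by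
    intro τ
    have hbij : Function.Bijective (fun π : Equiv.Perm (Fin (2 * n)) => τ * π) :=
      (Equiv.mulLeft τ).bijective
    have := Fintype.sum_bijective (fun π : Equiv.Perm (Fin (2 * n)) => τ * π) hbij
      (fun π => ((Equiv.Perm.sign π : ℤ) : ℝ) * ∏ j : Fin n, (Aind n π j - Bind n π j))
      (fun ρ => ((Equiv.Perm.sign ρ : ℤ) : ℝ) * (((Equiv.Perm.sign τ : ℤ) : ℝ) * Gp n ρ τ))
      (by
        intro π
        rw [Gp_shift, map_mul, ← mul_assoc, sign_cancel])
    rw [← this]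
    exact S_eq (n := n)
  rw [Finset.sum_congr rfl (fun τ _ => hinner τ), Finset.sum_const, Finset.card_univ,
    Fintype.card_perm, Fintype.card_fin, nsmul_eq_mul]
  have h2 : (2 : ℝ) ^ n ≠ 0 := by positivity
  field_simp

end Main

theorem stmt_9 (n : ℕ) (hn : 1 ≤ n) (σ : Equiv.Perm (Fin (2 * n))) (i : Fin 2) :
    Estar n (fun a => Emat n i (σ a)) =
      ((Equiv.Perm.sign σ : ℤ) : ℝ) * (Nat.factorial (2 * n) : ℝ) := by
  exact stmt_9' n σ i
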